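/- Let n ≥ 1, let A be a skew-symmetric n×n real matrix (Aᵀ = −A), and let φ : ℝⁿ → ℝ be twice continuously differentiable such that Dφ(x)(A·x) = 0 for every x ∈ ℝⁿ. Let ∇φ : ℝⁿ → ℝⁿ denote the gradient of φ with respect to the standard Euclidean inner product, i.e. ⟨∇φ(x), v⟩ = Dφ(x)(v) for all x, v. Then the gradient field is equivariant with respect to the infinitesimal rotation A: for every x ∈ ℝⁿ, D(∇φ)(x)(A·x) = A·(∇φ(x)). -/

import Mathlib

/-- Let `A` be a skew-symmetric `n × n` real matrix and
`φ : ℝⁿ → ℝ` a `C²` function with `Dφ(x)(A·x) = 0` for all `x` (radiality). Let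
`g = ∇φ` be the Euclidean gradient of `φ`, characterized by
`⟨g(x), v⟩ = Dφ(x)(v)`. Then the gradient field is equivariant for `A`:
`Dg(x)(A·x) = A·g(x)` for every `x`. -/
theorem stmt_19 (n : ℕ) (hn : 1 ≤ n)
    (A : Matrix (Fin n) (Fin n) ℝ) (hA : A.transpose = -A)
    (φ : (Fin n → ℝ) → ℝ) (hφ : ContDiff ℝ 2 φ)
    (hrad : ∀ x : Fin n → ℝ, fderiv ℝ φ x (A.mulVec x) = 0)
    (g : (Fin n → ℝ) → (Fin n → ℝ))
    (hg : ∀ x v : Fin n → ℝ, (∑ j, g x j * v j) = fderiv ℝ φ x v) :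
    ∀ x : Fin n → ℝ, fderiv ℝ g x (A.mulVec x) = A.mulVec (g x) := by
  intro x
  set f' : (Fin n → ℝ) → (Fin n → ℝ) →L[ℝ] ℝ := fderiv ℝ φ with hf'def
  have hφdiff : Differentiable ℝ φ := hφ.differentiable (by norm_num)
  have hf'c : ContDiff ℝ 1 f' := hφ.fderiv_right (m := 1) (by norm_num)
  have hf'diff : Differentiable ℝ f' := hf'c.differentiable one_ne_zero
  set f'' : ((Fin n → ℝ)) →L[ℝ] (Fin n → ℝ) →L[ℝ] ℝ := fderiv ℝ f' x with hf''def
  have hf''x : HasFDerivAt f' f'' x := (hf'diff x).hasFDerivAt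
  have hsymm : ∀ v w, f'' v w = f'' w v :=
    second_derivative_symmetric (fun y => (hφdiff y).hasFDerivAt) hf''x
  -- the matrix as a continuous linear map
  set M : (Fin n → ℝ) →L[ℝ] (Fin n → ℝ) := LinearMap.toContinuousLinearMap A.mulVecLin
    with hMdef
  have hM : ∀ v, M v = A.mulVec v := fun v => rfl
  -- differentiate the radial identity
  have hradD : ∀ w, f'' w (A.mulVec x) + f' x (A.mulVec w) = 0 := by
    have h1 : HasFDerivAt (fun y => f' y (A.mulVec y))
        ((f' x).comp M + f''.flip (A.mulVec x)) x := by
      have hMd : HasFDerivAt (fun y : Fin n → ℝ => A.mulVec y) M x := by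
        exact M.hasFDerivAt (x := x)
      exact hf''x.clm_apply hMd
    have h2 : HasFDerivAt (fun y => f' y (A.mulVec y)) (0 : (Fin n → ℝ) →L[ℝ] ℝ) x := by
      have : (fun y => f' y (A.mulVec y)) = fun _ => (0 : ℝ) := funext hrad
      rw [this]; exact hasFDerivAt_const 0 x
    have h3 := h1.unique h2
    intro w
    have := congrArg (fun (L : (Fin n → ℝ) →L[ℝ] ℝ) => L w) h3
    simpa [hM, add_comm] using this
  -- identify g
  have hgj : ∀ y j, g y j = f' y (Pi.single j 1) := by
    intro y j
    have := hg y (Pi.single j 1)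
    exact (by simpa [Pi.single_apply, mul_ite, Finset.sum_ite_eq'] using this : g y j = f' y (Pi.single j 1))
  -- the coordinate-extraction CLM
  set T : ((Fin n → ℝ) →L[ℝ] ℝ) →L[ℝ] (Fin n → ℝ) :=
    ContinuousLinearMap.pi (fun j => ContinuousLinearMap.apply ℝ ℝ (Pi.single j 1))
    with hTdef
  have hgT : g = fun y => T (f' y) := by
    funext y; funext j; simp [hTdef, hgj y j]
  have hgD : HasFDerivAt g (T.comp f'') x := by
    rw [hgT]; exact (T.hasFDerivAt).comp x hf''x
  have hfd : fderiv ℝ g x = T.comp f'' := hgD.fderiv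
  rw [hfd]
  funext j
  have e1 : (T.comp f'') (A.mulVec x) j = f'' (A.mulVec x) (Pi.single j 1) := rfl
  have e2 : f'' (A.mulVec x) (Pi.single j 1) = - f' x (A.mulVec (Pi.single j 1)) := by
    rw [hsymm]
    have := hradD (Pi.single j 1)
    linarith
  have e3 : f' x (A.mulVec (Pi.single j 1)) = ∑ i, g x i * A i j := by
    rw [← hg]
    congr 1; funext i
    congr 1
    simp [Matrix.mulVec, dotProduct, Pi.single_apply, mul_ite, Finset.sum_ite_eq']
  have hAij : ∀ i, A i j = - A j i := by
    intro i
    have := congrFun (congrFun hA j) i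
    simpa [Matrix.transpose_apply] using this
  rw [e1, e2, e3]
  simp only [Matrix.mulVec, dotProduct]
  rw [← Finset.sum_neg_distrib]
  congr 1; funext i
  rw [hAij i]; ring
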